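/- Let Z, W be Banach spaces, T : Z → W a quotient mapping, and let w : A → W be a continuous map from a topological space A such that ‖w(a)‖ < r for all a ∈ A. Define the multivalued map G : A → 2^Z by G(a) = {z ∈ Z : ‖z‖ ≤ R, T(z) = w(a)} where R > r. Then each G(a) is a nonempty closed convex subset of Z, and G is lower semicontinuous: for every open U ⊆ Z, the set {a ∈ A : G(a) ∩ U ≠ ∅} is open in A. -/

import Mathlib

open Metric Set

/-- A bounded linear surjection `T : Z → Y` is a *quotient mapping* if the induced
operator `Z ⧸ ker T → Y` is a linear isometric isomorphism. -/
def IsQuotientMapping {Z Y : Type*} [NormedAddCommGroup Z] [NormedAddCommGroup Y]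
    [NormedSpace ℝ Z] [NormedSpace ℝ Y] (T : Z →L[ℝ] Y) : Prop :=
  Function.Surjective T ∧
    ∃ e : (Z ⧸ LinearMap.ker (T : Z →ₗ[ℝ] Y)) ≃ₗᵢ[ℝ] Y,
      ∀ z : Z, e (Submodule.Quotient.mk z) = T z

/-- Key lifting lemma: any `y` lifts to a `z` of norm `< c` whenever `c > ‖y‖`. -/
theorem lift_lt {Z Y : Type*} [NormedAddCommGroup Z] [NormedAddCommGroup Y]
    [NormedSpace ℝ Z] [NormedSpace ℝ Y] (T : Z →L[ℝ] Y) (hT : IsQuotientMapping T)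
    (y : Y) {c : ℝ} (hc : ‖y‖ < c) : ∃ z : Z, T z = y ∧ ‖z‖ < c := by
  obtain ⟨-, e, he⟩ := hT
  obtain ⟨z, hz, hzn⟩ := Submodule.Quotient.norm_mk_lt (e.symm y) (sub_pos.mpr hc)
  refine ⟨z, ?_, ?_⟩
  · have := he z
    rw [hz] at this
    simpa using this.symm
  · have : ‖e.symm y‖ = ‖y‖ := e.symm.norm_map y
    rw [this] at hzn
    linarith

/-- If `T : Z → W` is a quotient mapping and `w : A → W` is continuous with `‖w a‖ < r`
for all `a`, then for `R > r` the set-valued map `G(a) = {z : ‖z‖ ≤ R, T z = w a}` has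
nonempty closed convex values and is lower semicontinuous. -/
theorem stmt9 {Z W : Type*}
    [NormedAddCommGroup Z] [NormedSpace ℝ Z] [CompleteSpace Z]
    [NormedAddCommGroup W] [NormedSpace ℝ W] [CompleteSpace W]
    (T : Z →L[ℝ] W) (hT : IsQuotientMapping T)
    {A : Type*} [TopologicalSpace A] (w : A → W) (hw : Continuous w)
    (r R : ℝ) (hr : ∀ a : A, ‖w a‖ < r) (hrR : r < R) :
    (∀ a : A,
        ({z : Z | ‖z‖ ≤ R ∧ T z = w a}).Nonempty ∧
        IsClosed {z : Z | ‖z‖ ≤ R ∧ T z = w a} ∧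
        Convex ℝ {z : Z | ‖z‖ ≤ R ∧ T z = w a}) ∧
      ∀ U : Set Z, IsOpen U →
        IsOpen {a : A | ({z : Z | ‖z‖ ≤ R ∧ T z = w a} ∩ U).Nonempty} := by
  constructor
  · intro a
    refine ⟨?_, ?_, ?_⟩
    · obtain ⟨z, hz, hzn⟩ := lift_lt T hT (w a) ((hr a).trans hrR)
      exact ⟨z, hzn.le, hz⟩
    · have : {z : Z | ‖z‖ ≤ R ∧ T z = w a} =
        (closedBall (0 : Z) R) ∩ (T ⁻¹' {w a}) := by
        ext z; simp [mem_closedBall_zero_iff]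
      rw [this]
      exact isClosed_closedBall.inter (isClosed_singleton.preimage T.continuous)
    · intro x hx y hy s t hs ht hst
      refine ⟨?_, ?_⟩
      · calc ‖s • x + t • y‖ ≤ ‖s • x‖ + ‖t • y‖ := norm_add_le _ _
          _ = s * ‖x‖ + t * ‖y‖ := by
              rw [norm_smul, norm_smul, Real.norm_of_nonneg hs, Real.norm_of_nonneg ht]
          _ ≤ s * R + t * R := by
              gcongr; exacts [hx.1, hy.1]
          _ = R := by rw [← add_mul, hst, one_mul]
      · simp [map_add, map_smul, hx.2, hy.2, ← add_smul, hst]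
  · intro U hU
    rw [isOpen_iff_mem_nhds]
    rintro a₀ ⟨z₀, ⟨hz₀R, hz₀T⟩, hz₀U⟩
    obtain ⟨ε, hε, hball⟩ := Metric.isOpen_iff.mp hU z₀ hz₀U
    obtain ⟨v, hvT, hvn⟩ := lift_lt T hT (w a₀) (hr a₀)
    -- choose s
    set s : ℝ := min 1 (ε / (2 * (‖v - z₀‖ + 1))) with hs_def
    have hden : (0:ℝ) < 2 * (‖v - z₀‖ + 1) := by positivity
    have hs0 : 0 < s := lt_min one_pos (by positivity)
    have hs1 : s ≤ 1 := min_le_left _ _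
    have hsv : s * ‖v - z₀‖ < ε / 2 := by
      have h1 : s ≤ ε / (2 * (‖v - z₀‖ + 1)) := min_le_right _ _
      have h2 : s * ‖v - z₀‖ ≤ (ε / (2 * (‖v - z₀‖ + 1))) * ‖v - z₀‖ := by
        apply mul_le_mul_of_nonneg_right h1 (norm_nonneg _)
      have h3 : (ε / (2 * (‖v - z₀‖ + 1))) * ‖v - z₀‖ < ε / 2 := by
        rw [div_mul_eq_mul_div, div_lt_div_iff₀ hden two_pos]
        nlinarith [norm_nonneg (v - z₀)]
      linarith
    set η : ℝ := min (s * (R - r)) (ε / 2) with hη_def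
    have hη0 : 0 < η := lt_min (by nlinarith) (by positivity)
    have hnbhd : w ⁻¹' ball (w a₀) η ∈ nhds a₀ :=
      hw.continuousAt.preimage_mem_nhds (isOpen_ball.mem_nhds (mem_ball_self hη0))
    refine Filter.mem_of_superset hnbhd ?_
    intro a ha
    have haη : ‖w a - w a₀‖ < η := by
      simpa [dist_eq_norm] using ha
    obtain ⟨u, huT, hun⟩ := lift_lt T hT (w a - w a₀) haη
    refine ⟨z₀ + s • (v - z₀) + u, ⟨?_, ?_⟩, ?_⟩
    · have h1 : z₀ + s • (v - z₀) = (1 - s) • z₀ + s • v := by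
        simp [smul_sub, sub_smul]; abel
      have h2 : ‖z₀ + s • (v - z₀)‖ ≤ (1 - s) * ‖z₀‖ + s * ‖v‖ := by
        rw [h1]
        calc ‖(1 - s) • z₀ + s • v‖ ≤ ‖(1 - s) • z₀‖ + ‖s • v‖ := norm_add_le _ _
          _ = (1 - s) * ‖z₀‖ + s * ‖v‖ := by
            rw [norm_smul, norm_smul, Real.norm_of_nonneg (by linarith),
              Real.norm_of_nonneg hs0.le]
      have h3 : ‖z₀ + s • (v - z₀) + u‖ ≤ ‖z₀ + s • (v - z₀)‖ + ‖u‖ := norm_add_le _ _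
      have h4 : ‖u‖ < s * (R - r) := hun.trans_le (min_le_left _ _)
      nlinarith [norm_nonneg z₀, norm_nonneg v, hvn, hz₀R]
    · have : T v = T z₀ := by rw [hvT, hz₀T]
      simp [map_add, map_smul, this, huT, hz₀T]
    · apply hball
      have : dist (z₀ + s • (v - z₀) + u) z₀ = ‖s • (v - z₀) + u‖ := by
        rw [dist_eq_norm]; congr 1; abel
      rw [mem_ball, this]
      calc ‖s • (v - z₀) + u‖ ≤ ‖s • (v - z₀)‖ + ‖u‖ := norm_add_le _ _
        _ = s * ‖v - z₀‖ + ‖u‖ := by rw [norm_smul, Real.norm_of_nonneg hs0.le]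
        _ < ε / 2 + ε / 2 := by
            have : ‖u‖ < ε / 2 := hun.trans_le (min_le_right _ _)
            linarith
        _ = ε := by ring
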